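/- For a nonnegative integer l, σ ∈ {0,1}, and real ρ > 0, one has C^ρ_{2l+σ}(z) = (Γ(ρ+2l+σ+1)/Γ(ρ)) · Σ_{m=0}^{l} (-1)^{m+l} Γ(ρ+l+m+σ) (2z)^σ / (m!·l!·(l-m)!·Γ(ρ+l+m+σ+1)) · ₂F₁(-m, -l; σ+1/2; z²). -/

import Mathlib

open Finset

/-- Pochhammer (rising factorial) `(a)_k`. -/
noncomputable def poch (a : ℝ) (k : ℕ) : ℝ := ∏ i ∈ Finset.range k, (a + i)

/-- Gegenbauer polynomial `C^ρ_n(z)`. -/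
noncomputable def gegenbauer (ρ : ℝ) (n : ℕ) (z : ℝ) : ℝ :=
  ∑ k ∈ Finset.range (n / 2 + 1),
    (-1 : ℝ) ^ k * Real.Gamma (ρ + n - k) /
      (Real.Gamma ρ * k.factorial * (n - 2 * k).factorial) * (2 * z) ^ (n - 2 * k)

/-- Terminating Gauss hypergeometric series `₂F₁(-n, b; c; x)`. -/
noncomputable def F21fin (n : ℕ) (b c x : ℝ) : ℝ :=
  ∑ k ∈ Finset.range (n + 1),
    poch (-(n : ℝ)) k * poch b k / (poch c k * k.factorial) * x ^ k

lemma poch_zero (a : ℝ) : poch a 0 = 1 := by simp [poch]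

lemma poch_succ (a : ℝ) (k : ℕ) : poch a (k+1) = poch a k * (a + k) := by
  simp [poch, Finset.prod_range_succ]

lemma poch_pos {a : ℝ} (ha : 0 < a) (k : ℕ) : 0 < poch a k := by
  induction k with
  | zero => simp [poch_zero]
  | succ k ih =>
    rw [poch_succ]
    exact mul_pos ih (by positivity)

lemma poch_neg_nat (m : ℕ) : ∀ j : ℕ, j ≤ m →
    poch (-(m:ℝ)) j = (-1)^j * m.factorial / (m - j).factorial := by
  intro j
  induction j with
  | zero =>
    intro _
    simp only [poch_zero, Nat.sub_zero, pow_zero, one_mul]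
    rw [div_self (by positivity : ((m).factorial:ℝ) ≠ 0)]
  | succ j ih =>
    intro h
    have hj : j ≤ m := by omega
    rw [poch_succ, ih hj]
    have h1 : (-(m:ℝ) + j) = -((m - j : ℕ) : ℝ) := by
      push_cast [Nat.cast_sub hj]; ring
    have key : ((m - j).factorial : ℝ) = ((m-j:ℕ):ℝ) * ((m - (j+1)).factorial : ℝ) := by
      have h3 : m - j = (m - (j+1)) + 1 := by omega
      rw [h3, Nat.factorial_succ]
      push_cast
      ring
    have h4 : ((m - (j+1)).factorial : ℝ) ≠ 0 := by positivity
    have h5 : ((m - j : ℕ) : ℝ) ≠ 0 := by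
      have : 0 < m - j := by omega
      exact_mod_cast this.ne'
    rw [h1, key]
    generalize ((m - (j+1)).factorial : ℝ) = A at h4 ⊢
    generalize ((m - j : ℕ) : ℝ) = B at h5 ⊢
    field_simp
    ring

lemma poch_neg_eq_zero {m j : ℕ} (h : m < j) : poch (-(m:ℝ)) j = 0 := by
  apply Finset.prod_eq_zero (Finset.mem_range.mpr h)
  simp

lemma key_choose : ∀ (L : ℕ) (a : ℝ), 0 < a →
    ∑ i ∈ range (L+1), (-1:ℝ)^i * (L.choose i) / (a+i) =
      L.factorial * Real.Gamma a / Real.Gamma (a + L + 1) := by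
  intro L
  induction L with
  | zero =>
    intro a ha
    simp only [zero_add, range_one, sum_singleton, pow_zero, Nat.choose_self, Nat.cast_one, mul_one,
      Nat.factorial_zero, Nat.cast_zero, add_zero, one_mul]
    rw [Real.Gamma_add_one ha.ne']
    rw [eq_div_iff (by positivity : a * Real.Gamma a ≠ 0)]
    field_simp
  | succ L ih =>
    intro a ha
    have ha1 : (0:ℝ) < a + 1 := by linarith
    have hz : ((L.choose (L+1) : ℕ) : ℝ) = 0 := by
      simp [Nat.choose_eq_zero_of_lt (by omega : L < L + 1)]
    have e1 : ∑ i ∈ range (L+2), (-1:ℝ)^i * ((L+1).choose i) / (a+i)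
        = ∑ i ∈ range (L+1), (-1:ℝ)^i * (L.choose i) / (a+i)
          - ∑ i ∈ range (L+1), (-1:ℝ)^i * (L.choose i) / ((a+1)+i) := by
      rw [Finset.sum_range_succ' (fun i => (-1:ℝ)^i * (((L+1).choose i : ℕ) : ℝ) / (a+i)) (L+1)]
      push_cast
      have e2 : ∀ i ∈ range (L+1),
          (-1:ℝ)^(i+1) * (((L+1).choose (i+1) : ℕ) : ℝ) / (a+((i:ℝ)+1))
          = ((-1:ℝ)^(i+1) * ((L.choose (i+1) : ℕ) : ℝ) / (a+((i:ℝ)+1)))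
            - ((-1:ℝ)^i * ((L.choose i : ℕ) : ℝ) / ((a+1)+i)) := by
        intro i _
        rw [Nat.choose_succ_succ]
        push_cast
        have hne : a + ((i:ℝ)+1) ≠ 0 := by positivity
        rw [show (a+1)+(i:ℝ) = a + ((i:ℝ)+1) by ring]
        field_simp
        ring
      rw [Finset.sum_congr rfl e2, Finset.sum_sub_distrib]
      rw [Finset.sum_range_succ
        (fun i => (-1:ℝ)^(i+1) * ((L.choose (i+1) : ℕ) : ℝ) / (a+((i:ℝ)+1))) L]
      rw [Finset.sum_range_succ' (fun i => (-1:ℝ)^i * ((L.choose i : ℕ) : ℝ) / (a+i)) L]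
      simp only [hz, Nat.choose_zero_right, Nat.cast_one, mul_zero, zero_div, add_zero]
      push_cast
      ring
    rw [show L + 1 + 1 = L + 2 from rfl] at *
    rw [e1, ih a ha, ih (a+1) ha1]
    have hG1 : Real.Gamma (a + L + 1) ≠ 0 := by
      have : (0:ℝ) < a + L + 1 := by positivity
      exact (Real.Gamma_pos_of_pos this).ne'
    have hG2 : Real.Gamma a ≠ 0 := (Real.Gamma_pos_of_pos ha).ne'
    have g1 : Real.Gamma (a + 1 + L + 1) = (a + L + 1) * Real.Gamma (a + L + 1) := by
      rw [show a + 1 + (L:ℝ) + 1 = (a + L + 1) + 1 by ring,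
        Real.Gamma_add_one (by positivity : (a:ℝ) + L + 1 ≠ 0)]
    have g2 : Real.Gamma (a + 1) = a * Real.Gamma a := Real.Gamma_add_one ha.ne'
    have g3 : Real.Gamma (a + (L+1:ℕ) + 1) = (a + L + 1) * Real.Gamma (a + L + 1) := by
      push_cast
      rw [show a + ((L:ℝ)+1) + 1 = (a + L + 1) + 1 by ring,
        Real.Gamma_add_one (by positivity : (a:ℝ) + L + 1 ≠ 0)]
    rw [g1, g2, g3]
    have hfac : (((L+1).factorial : ℕ) : ℝ) = (L+1) * L.factorial := by
      rw [Nat.factorial_succ]; push_cast; ring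
    rw [hfac]
    field_simp
    ring

lemma key_fact (L : ℕ) (a : ℝ) (ha : 0 < a) :
    ∑ i ∈ range (L+1), (-1:ℝ)^i / ((a+i) * i.factorial * (L-i).factorial) =
      Real.Gamma a / Real.Gamma (a + L + 1) := by
  have h := key_choose L a ha
  have e : ∀ i ∈ range (L+1),
      (-1:ℝ)^i * (L.choose i) / (a+i)
        = (L.factorial : ℝ) * ((-1:ℝ)^i / ((a+i) * i.factorial * (L-i).factorial)) := by
    intro i hi
    have hiL : i ≤ L := by have := Finset.mem_range.mp hi; omega
    have hc : (L.choose i) * i.factorial * (L-i).factorial = L.factorial :=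
      Nat.choose_mul_factorial_mul_factorial hiL
    have hc' : ((L.choose i : ℕ) : ℝ) * i.factorial * (L-i).factorial = L.factorial := by
      exact_mod_cast hc
    have h1 : (a + (i:ℝ)) ≠ 0 := by positivity
    have h2 : ((i.factorial : ℕ) : ℝ) ≠ 0 := by positivity
    have h3 : (((L-i).factorial : ℕ) : ℝ) ≠ 0 := by positivity
    field_simp
    linear_combination hc'
  rw [Finset.sum_congr rfl e, ← Finset.mul_sum, mul_div_assoc] at h
  have hL : ((L.factorial : ℕ) : ℝ) ≠ 0 := by positivity
  exact mul_left_cancel₀ hL h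

lemma poch_half (j : ℕ) : poch (1/2 : ℝ) j * 4^j * j.factorial = (2*j).factorial := by
  induction j with
  | zero => simp [poch_zero]
  | succ j ih =>
    rw [poch_succ]
    have h1 : ((2*(j+1)).factorial : ℝ) = (2*j+2) * ((2*j+1) * (2*j).factorial) := by
      rw [show 2*(j+1) = (2*j+1)+1 from by ring, Nat.factorial_succ, Nat.factorial_succ]
      push_cast; ring
    rw [h1, Nat.factorial_succ]
    push_cast
    linear_combination (2*(j:ℝ)+2) * (2*(j:ℝ)+1) * ih

lemma poch_3half (j : ℕ) : poch (3/2 : ℝ) j * 4^j * j.factorial = (2*j+1).factorial := by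
  induction j with
  | zero => simp [poch_zero]
  | succ j ih =>
    rw [poch_succ]
    have h1 : ((2*(j+1)+1).factorial : ℝ) = (2*j+3) * ((2*j+2) * (2*j+1).factorial) := by
      rw [show 2*(j+1)+1 = ((2*j+1)+1)+1 from by ring, Nat.factorial_succ, Nat.factorial_succ]
      push_cast; ring
    rw [h1, Nat.factorial_succ]
    push_cast
    linear_combination (2*(j:ℝ)+3) * (2*(j:ℝ)+2) * ih

lemma poch_sigma_half (σ : ℕ) (hσ : σ ≤ 1) (j : ℕ) :
    poch ((σ:ℝ) + 1/2) j * 4^j * j.factorial = (2*j + σ).factorial := by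
  interval_cases σ
  · simpa using poch_half j
  · have := poch_3half j
    norm_num at this ⊢
    exact this

lemma aux_term (T R G b M Lf Li If Lq P J s u w : ℝ) (hb : b ≠ 0) (hG : G ≠ 0)
    (hM : M ≠ 0) (hLf : Lf ≠ 0) :
    T / R * (s * G * u / (M * Lf * Li * (b * G)) * ((M * Lf) / (If * Lq) / (P * J) * w))
    = (s * u * w * T / (R * Lq * P * J)) * (1 / (b * If * Li)) := by
  rcases eq_or_ne Li 0 with h | hLi
  · simp [h]
  rcases eq_or_ne If 0 with h | hIf
  · simp [h]
  rcases eq_or_ne Lq 0 with h | hLq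
  · simp [h]
  rcases eq_or_ne P 0 with h | hP
  · simp [h]
  rcases eq_or_ne J 0 with h | hJ
  · simp [h]
  rcases eq_or_ne R 0 with h | hR
  · simp [h]
  field_simp

set_option maxHeartbeats 2000000 in
lemma gegen_inner_sum (l σ j : ℕ) (hσ : σ ≤ 1) (hj : j ≤ l) (ρ : ℝ) (hρ : 0 < ρ) (z : ℝ) :
    ∑ m ∈ range (l+1), Real.Gamma (ρ + 2*l + σ + 1) / Real.Gamma ρ *
        ((-1:ℝ)^(m+l) * Real.Gamma (ρ + l + m + σ) * (2*z)^σ /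
          (m.factorial * l.factorial * (l-m).factorial * Real.Gamma (ρ + l + m + σ + 1)) *
         (poch (-(m:ℝ)) j * poch (-(l:ℝ)) j / (poch ((σ:ℝ)+1/2) j * j.factorial) * (z^2)^j))
    = (-1:ℝ)^(l-j) * Real.Gamma (ρ + l + j + σ) /
        (Real.Gamma ρ * (l-j).factorial * (2*j+σ).factorial) * (2*z)^(2*j+σ) := by
  set a : ℝ := ρ + l + j + σ with ha_def
  have ha : 0 < a := by positivity
  set L : ℕ := l - j with hL_def
  clear_value a L
  set f : ℕ → ℝ := fun m => Real.Gamma (ρ + 2*l + σ + 1) / Real.Gamma ρ *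
        ((-1:ℝ)^(m+l) * Real.Gamma (ρ + l + m + σ) * (2*z)^σ /
          (m.factorial * l.factorial * (l-m).factorial * Real.Gamma (ρ + l + m + σ + 1)) *
         (poch (-(m:ℝ)) j * poch (-(l:ℝ)) j / (poch ((σ:ℝ)+1/2) j * j.factorial) * (z^2)^j))
    with hf_def
  have step1 : ∑ m ∈ range (l+1), f m = ∑ m ∈ Finset.Ico j (l+1), f m := by
    refine (Finset.sum_subset ?_ ?_).symm
    · intro x hx; simp only [Finset.mem_Ico, Finset.mem_range] at hx ⊢; omega
    · intro x hx hnx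
      have hxj : x < j := by
        simp only [Finset.mem_Ico, Finset.mem_range] at hx hnx; omega
      simp only [hf_def, poch_neg_eq_zero hxj, zero_mul, zero_div, mul_zero]
  rw [step1, Finset.sum_Ico_eq_sum_range, show l + 1 - j = L + 1 from by omega]
  set K : ℝ := (-1:ℝ)^(l+j) * (2*z)^σ * (z^2)^j * Real.Gamma (ρ + 2*l + σ + 1) /
      (Real.Gamma ρ * L.factorial * poch ((σ:ℝ)+1/2) j * j.factorial) with hK_def
  have hpoch_pos : 0 < poch ((σ:ℝ)+1/2) j := poch_pos (by positivity) j
  have hΓρ : Real.Gamma ρ ≠ 0 := (Real.Gamma_pos_of_pos hρ).ne'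
  have step2 : ∀ i ∈ range (L+1),
      f (j + i) = K * ((-1:ℝ)^i / ((a+i) * i.factorial * (L-i).factorial)) := by
    intro i hi
    have hiL : i ≤ L := by simp only [Finset.mem_range] at hi; omega
    have h1 : poch (-((j+i:ℕ):ℝ)) j = (-1:ℝ)^j * (j+i).factorial / i.factorial := by
      rw [poch_neg_nat (j+i) j (by omega), show j + i - j = i from by omega]
    have h2 : poch (-(l:ℝ)) j = (-1:ℝ)^j * l.factorial / L.factorial := by
      rw [poch_neg_nat l j hj, hL_def]
    have h12 : poch (-((j+i:ℕ):ℝ)) j * poch (-(l:ℝ)) j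
        = ((j+i).factorial * l.factorial : ℝ) / (i.factorial * L.factorial) := by
      rw [h1, h2, div_mul_div_comm,
        show ((-1:ℝ)^j * ((j+i).factorial:ℝ)) * ((-1:ℝ)^j * (l.factorial:ℝ))
          = (((-1:ℝ)^j) * ((-1:ℝ)^j)) * (((j+i).factorial:ℝ) * (l.factorial:ℝ)) from by ring,
        show ((-1:ℝ)^j) * ((-1:ℝ)^j) = 1 from by rw [← pow_add, ← two_mul, pow_mul]; norm_num,
        one_mul]
    have hai : (0:ℝ) < a + i := by positivity
    have h3 : Real.Gamma (ρ + l + (j+i:ℕ) + σ + 1) = (a + i) * Real.Gamma (a + i) := by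
      rw [show ρ + (l:ℝ) + ((j+i:ℕ):ℝ) + σ + 1 = (a + i) + 1 by
        simp only [ha_def]; push_cast; ring]
      exact Real.Gamma_add_one hai.ne'
    have h4 : Real.Gamma (ρ + l + (j+i:ℕ) + σ) = Real.Gamma (a + i) := by
      congr 1; simp only [ha_def]; push_cast; ring
    have h5 : (l - (j+i)) = L - i := by omega
    simp only [hf_def, hK_def]
    rw [h12, h3, h4, h5]
    set b : ℝ := a + (i:ℝ) with hb_def
    have hb0 : (0:ℝ) < b := hai
    clear_value b
    have n1 : Real.Gamma b ≠ 0 := (Real.Gamma_pos_of_pos hb0).ne'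
    have n2 : b ≠ 0 := hb0.ne'
    have n3 : ((j+i).factorial : ℝ) ≠ 0 := by positivity
    have n4 : (i.factorial : ℝ) ≠ 0 := by positivity
    have n5 : ((L-i).factorial : ℝ) ≠ 0 := by positivity
    have n6 : (l.factorial : ℝ) ≠ 0 := by positivity
    have n7 : (L.factorial : ℝ) ≠ 0 := by positivity
    have n8 : (j.factorial : ℝ) ≠ 0 := by positivity
    have n9 : poch ((σ:ℝ)+1/2) j ≠ 0 := hpoch_pos.ne'
    rw [aux_term _ _ _ _ _ _ _ _ _ _ _ _ _ _ n2 n1 n3 n6]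
    rw [show ((-1:ℝ))^(j+i+l) = (-1:ℝ)^(l+j) * (-1)^i from by rw [← pow_add]; congr 1; omega]
    ring
  rw [Finset.sum_congr rfl step2, ← Finset.mul_sum, key_fact L a ha]
  have hΓt : Real.Gamma (ρ + 2*l + σ + 1) ≠ 0 := by
    have : (0:ℝ) < ρ + 2*l + σ + 1 := by positivity
    exact (Real.Gamma_pos_of_pos this).ne'
  have hAL : Real.Gamma (a + L + 1) = Real.Gamma (ρ + 2*l + σ + 1) := by
    congr 1
    simp only [ha_def, hL_def]
    push_cast [Nat.cast_sub hj]
    ring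
  have hΓa : Real.Gamma a ≠ 0 := (Real.Gamma_pos_of_pos ha).ne'
  have hfac21 : ((2*j+σ).factorial : ℝ) = poch ((σ:ℝ)+1/2) j * 4^j * j.factorial :=
    (poch_sigma_half σ hσ j).symm
  have hpow : (2*z)^(2*j+σ) = (2*z)^σ * (4^j * (z^2)^j) := by
    rw [pow_add, pow_mul, show ((2*z)^2 : ℝ) = 4 * z^2 by ring, mul_pow]
    ring
  have hsign : ((-1:ℝ))^L = (-1:ℝ)^(l+j) := by
    rw [hL_def, show l+j = (l-j)+2*j from by omega, pow_add, pow_mul]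
    norm_num
  rw [hAL, hK_def, hfac21, hpow, hsign]
  have n7 : (L.factorial : ℝ) ≠ 0 := by positivity
  have n8 : (j.factorial : ℝ) ≠ 0 := by positivity
  have n9 : poch ((σ:ℝ)+1/2) j ≠ 0 := hpoch_pos.ne'
  have n10 : (4:ℝ)^j ≠ 0 := by positivity
  rw [div_mul_div_comm,
    show (-1:ℝ)^(l+j) * (2*z)^σ * (z^2)^j * Real.Gamma (ρ + 2*l + σ + 1) * Real.Gamma a
      = ((-1:ℝ)^(l+j) * (2*z)^σ * (z^2)^j * Real.Gamma a) * Real.Gamma (ρ + 2*l + σ + 1)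
      from by ring,
    mul_div_mul_right _ _ hΓt]
  field_simp

theorem stmt1 (l σ : ℕ) (hσ : σ ≤ 1) (ρ : ℝ) (hρ : 0 < ρ) (z : ℝ) :
    gegenbauer ρ (2 * l + σ) z =
      Real.Gamma (ρ + 2 * l + σ + 1) / Real.Gamma ρ *
        ∑ m ∈ Finset.range (l + 1),
          (-1 : ℝ) ^ (m + l) * Real.Gamma (ρ + l + m + σ) * (2 * z) ^ σ /
              (m.factorial * l.factorial * (l - m).factorial *
                Real.Gamma (ρ + l + m + σ + 1)) *
            F21fin m (-(l : ℝ)) ((σ : ℝ) + 1 / 2) (z ^ 2) := by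
  have hF : ∀ m ∈ range (l+1), F21fin m (-(l:ℝ)) ((σ:ℝ)+1/2) (z^2)
      = ∑ k ∈ range (l+1),
          poch (-(m:ℝ)) k * poch (-(l:ℝ)) k / (poch ((σ:ℝ)+1/2) k * k.factorial) * (z^2)^k := by
    intro m hm
    have hml : m ≤ l := by have := Finset.mem_range.mp hm; omega
    rw [F21fin]
    apply Finset.sum_subset
    · intro x hx
      simp only [Finset.mem_range] at hx ⊢
      omega
    · intro x _ hnx
      have hmx : m < x := by
        simp only [Finset.mem_range, not_lt] at hnx
        omega
      rw [poch_neg_eq_zero hmx, zero_mul, zero_div, zero_mul]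
  rw [Finset.sum_congr rfl (fun m hm => by rw [hF m hm] :
    ∀ m ∈ range (l+1), (-1 : ℝ) ^ (m + l) * Real.Gamma (ρ + l + m + σ) * (2 * z) ^ σ /
        (m.factorial * l.factorial * (l - m).factorial * Real.Gamma (ρ + l + m + σ + 1)) *
        F21fin m (-(l : ℝ)) ((σ : ℝ) + 1 / 2) (z ^ 2)
      = (-1 : ℝ) ^ (m + l) * Real.Gamma (ρ + l + m + σ) * (2 * z) ^ σ /
        (m.factorial * l.factorial * (l - m).factorial * Real.Gamma (ρ + l + m + σ + 1)) *
        ∑ k ∈ range (l+1),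
          poch (-(m:ℝ)) k * poch (-(l:ℝ)) k / (poch ((σ:ℝ)+1/2) k * k.factorial) * (z^2)^k)]
  simp only [Finset.mul_sum]
  rw [Finset.sum_comm]
  rw [gegenbauer, show (2*l+σ)/2 + 1 = l + 1 from by omega]
  conv_lhs => rw [← Finset.sum_range_reflect]
  refine Finset.sum_congr rfl fun j hj => ?_
  have hjl : j ≤ l := by have := Finset.mem_range.mp hj; omega
  rw [gegen_inner_sum l σ j hσ hjl ρ hρ z]
  rw [show l + 1 - 1 - j = l - j from by omega]
  rw [show 2*l+σ - 2*(l-j) = 2*j+σ from by omega]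
  rw [show ρ + ((2*l+σ:ℕ):ℝ) - ((l-j:ℕ):ℝ) = ρ + l + j + σ from by
    push_cast [Nat.cast_sub hjl]; ring]
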